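/- Let α_0 > 0 and α_1, ..., α_n ≥ 0 with ∑_j α_j = α_0, p_j = α_j/α_0, and for each k let D_k = ∑_{j≠k} (α_j/α_0 − α_j/(α_0+1)) + ((α_k+1)/(α_0+1) − α_k/α_0) be the L1 change upon observing outcome k. Then the expected L1 divergence E = ∑_k p_k · D_k satisfies E ≤ 2/(1 + α_0). -/

import Mathlib

/-- Expected L1 divergence of the Dirichlet posterior-mean distribution
after one observation is at most `2 / (1 + α₀)`. -/
theorem stmt_1 (n : ℕ) (α : Fin n → ℝ) (α₀ : ℝ) (hα₀ : 0 < α₀)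
    (hnn : ∀ j, 0 ≤ α j) (hsum : ∑ j, α j = α₀)
    (p : Fin n → ℝ) (hp : ∀ j, p j = α j / α₀)
    (D : Fin n → ℝ)
    (hD : ∀ k, D k = ∑ j ∈ Finset.univ.erase k, (α j / α₀ - α j / (α₀ + 1))
        + ((α k + 1) / (α₀ + 1) - α k / α₀)) :
    ∑ k, p k * D k ≤ 2 / (1 + α₀) := by
  have h1 : (0:ℝ) < α₀ + 1 := by linarith
  have hDk : ∀ k, D k = 2 * (α₀ - α k) / (α₀ * (α₀ + 1)) := by
    intro k
    have herase : ∑ j ∈ Finset.univ.erase k, α j = α₀ - α k := by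
      rw [Finset.sum_erase_eq_sub (Finset.mem_univ k), hsum]
    have hsum' : ∑ j ∈ Finset.univ.erase k, (α j / α₀ - α j / (α₀ + 1))
        = (∑ j ∈ Finset.univ.erase k, α j) * (1/α₀ - 1/(α₀+1)) := by
      rw [Finset.sum_mul]
      refine Finset.sum_congr rfl fun j _ => by ring
    rw [hD k, hsum', herase]
    field_simp
    ring
  have hub : ∀ k, D k ≤ 2 / (α₀ + 1) := by
    intro k
    rw [hDk k]
    rw [div_le_div_iff₀ (by positivity) h1]
    have := hnn k
    nlinarith
  calc ∑ k, p k * D k ≤ ∑ k, p k * (2 / (α₀ + 1)) := by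
        apply Finset.sum_le_sum
        intro k _
        have hpk : 0 ≤ p k := by rw [hp k]; exact div_nonneg (hnn k) hα₀.le
        exact mul_le_mul_of_nonneg_left (hub k) hpk
    _ = 2 / (1 + α₀) := by
        rw [← Finset.sum_mul]
        have : ∑ k, p k = 1 := by
          simp only [hp]
          rw [← Finset.sum_div, hsum, div_self hα₀.ne']
        rw [this, one_mul, add_comm]
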